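/- Let g, h ∈ ℝ⟦X⟧ such that h has constant coefficient 0 and the linear coefficient of g is nonzero (coeff 1 g ≠ 0). If g∘h = g, then h = X. -/

import Mathlib

open PowerSeries

/-- Substitution (composition) of formal power series: `psComp g f = g ∘ f`,
the substitution of `f` into `g`.  When `f` has zero constant coefficient, the
`n`-th coefficient of `g ∘ f` is `∑_{k=0}^{n} g_k · [zⁿ] fᵏ`. -/
noncomputable def psComp (g f : PowerSeries ℝ) : PowerSeries ℝ :=
  PowerSeries.mk fun n => ∑ k ∈ Finset.range (n + 1),
    PowerSeries.coeff k g * PowerSeries.coeff n (f ^ k)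

theorem stmt8 (g h : PowerSeries ℝ)
    (hh0 : constantCoeff h = 0) (hg1 : coeff 1 g ≠ 0)
    (hcomm : psComp g h = g) : h = X := by
  have key : ∀ m, (∑ k ∈ Finset.range (m + 1),
      coeff k g * coeff m (h ^ k)) = coeff m g := by
    intro m
    have := congrArg (coeff m) hcomm
    simpa [psComp] using this
  ext n
  induction n using Nat.strong_induction_on with
  | _ n IH =>
    match n with
    | 0 => simp [PowerSeries.coeff_zero_eq_constantCoeff, hh0]
    | 1 =>
      have h1 := key 1
      rw [Finset.sum_range_succ, Finset.sum_range_succ, Finset.sum_range_zero] at h1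
      simp at h1
      have : coeff 1 h = 1 := by
        have := mul_left_cancel₀ hg1 (h1.trans (mul_one (coeff 1 g)).symm)
        exact this
      simp [this]
    | (N + 2) =>
      set n := N + 2 with hn
      have hn2 : 2 ≤ n := by omega
      -- For k ≥ 2, coeff n (h^k) = coeff n (X^k)
      have step : ∀ k, 2 ≤ k → coeff n (h ^ k) = coeff n ((X : PowerSeries ℝ) ^ k) := by
        intro k hk
        have hz : coeff n (h ^ k - X ^ k) = 0 := by
          rw [← geom_sum₂_mul h (X : PowerSeries ℝ) k, PowerSeries.coeff_mul]
          apply Finset.sum_eq_zero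
          intro p hp
          have hps := Finset.HasAntidiagonal.mem_antidiagonal.mp hp
          rcases lt_or_ge p.2 n with hlt | hge
          · have : coeff p.2 (h - X) = 0 := by
              rw [map_sub, IH p.2 hlt, sub_self]
            simp [this]
          · have hp1 : p.1 = 0 := by omega
            have hc0 : coeff p.1 (∑ i ∈ Finset.range k, h ^ i * (X : PowerSeries ℝ) ^ (k - 1 - i)) = 0 := by
              rw [hp1, map_sum]
              apply Finset.sum_eq_zero
              intro i _
              rw [PowerSeries.coeff_zero_eq_constantCoeff, map_mul, map_pow, map_pow,
                hh0, constantCoeff_X]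
              rcases Nat.eq_zero_or_pos i with rfl | hi'
              · rw [pow_zero, one_mul]
                exact zero_pow (by omega)
              · simp [zero_pow hi'.ne']
            simp [hc0]
        rw [map_sub, sub_eq_zero] at hz
        exact hz
      have hsum : ∑ k ∈ Finset.range (n + 1), coeff k g * coeff n (h ^ k)
          = coeff 1 g * coeff n h + coeff n g := by
        have hcongr : ∀ k ∈ Finset.range (n + 1), coeff k g * coeff n (h ^ k)
            = (if k = 1 then coeff 1 g * coeff n h else 0)
              + (if k = n then coeff n g else 0) := by
          intro k hk
          match k with
          | 0 =>
            have : n ≠ 0 := by omega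
            simp [PowerSeries.coeff_one, this, Ne.symm this]
          | 1 =>
            have : (1 : ℕ) ≠ n := by omega
            simp [this]
          | (j + 2) =>
            rw [step (j + 2) (by omega), PowerSeries.coeff_X_pow]
            have : (j + 2 : ℕ) ≠ 1 := by omega
            by_cases hkn : j + 2 = n
            · have hne : n ≠ 1 := by omega
              simp [hkn, this, hne]
            · have : n ≠ j + 2 := fun e => hkn e.symm
              simp [hkn, this]
        rw [Finset.sum_congr rfl hcongr, Finset.sum_add_distrib,
          Finset.sum_ite_eq' (Finset.range (n + 1)) 1
            (fun _ => coeff 1 g * coeff n h),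
          Finset.sum_ite_eq' (Finset.range (n + 1)) n (fun _ => coeff n g)]
        have h1 : (1 : ℕ) ∈ Finset.range (n + 1) := Finset.mem_range.mpr (by omega)
        have h2 : n ∈ Finset.range (n + 1) := by simp
        rw [if_pos h1, if_pos h2]
      have := key n
      rw [hsum] at this
      have hzero : coeff 1 g * coeff n h = 0 := by linarith
      have : coeff n h = 0 := by
        rcases mul_eq_zero.mp hzero with h' | h'
        · exact absurd h' hg1
        · exact h'
      rw [this, PowerSeries.coeff_X, if_neg (by omega)]
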